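/- arXiv:hep-th/9801168 — 6 statements merged into one kernel-verified Lean document; each statement's English description precedes it below -/
import Mathlib

section
/- The double Euler sum ∑_{n=1}^∞ H_n / n^2 equals 2ζ(3), where H_n = ∑_{j=1}^n 1/j is the n-th harmonic number. -/
open scoped BigOperators

noncomputable def H (n : ℕ) : ℝ := ∑ j ∈ Finset.range n, (1:ℝ)/(j+1)

noncomputable def zeta3 : ℝ := ∑' n : ℕ, (1:ℝ)/((n:ℝ)+1)^3

lemma H_succ (n : ℕ) : H (n+1) = H n + 1/((n:ℝ)+1) := by
  simp [H, Finset.sum_range_succ]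

lemma H_nonneg (n : ℕ) : 0 ≤ H n := by
  apply Finset.sum_nonneg; intro j _; positivity

lemma partial_sum (m N : ℕ) :
    ∑ n ∈ Finset.range N, (1/((n:ℝ)+1) - 1/((n:ℝ)+(m:ℝ)+2)) =
      H N + H (m+1) - H (N+m+1) := by
  induction N with
  | zero => simp [H]
  | succ N ih =>
    rw [Finset.sum_range_succ, ih]
    have h1 : H (N+1) = H N + 1/((N:ℝ)+1) := H_succ N
    have h2 : H (N+1+m+1) = H (N+m+1) + 1/((N:ℝ)+(m:ℝ)+2) := by
      have h3 : N+1+m+1 = (N+m+1)+1 := by ring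
      rw [h3, H_succ]; push_cast; ring
    rw [h1, h2]; ring

lemma tendsto_diff (m : ℕ) :
    Filter.Tendsto (fun N : ℕ => H (N+m+1) - H N) Filter.atTop (nhds 0) := by
  apply squeeze_zero (g := fun N : ℕ => ((m:ℝ)+1) * (1/((N:ℝ)+1)))
  · intro N
    have : H (N+m+1) - H N = ∑ j ∈ Finset.Ico N (N+m+1), (1:ℝ)/((j:ℝ)+1) := by
      rw [Finset.sum_Ico_eq_sub _ (by omega)]; simp [H]
    rw [this]
    apply Finset.sum_nonneg; intro j _; positivity
  · intro N
    have h1 : H (N+m+1) - H N = ∑ j ∈ Finset.Ico N (N+m+1), (1:ℝ)/((j:ℝ)+1) := by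
      rw [Finset.sum_Ico_eq_sub _ (by omega)]; simp [H]
    rw [h1]
    calc ∑ j ∈ Finset.Ico N (N+m+1), (1:ℝ)/((j:ℝ)+1)
        ≤ ∑ _j ∈ Finset.Ico N (N+m+1), (1:ℝ)/((N:ℝ)+1) := by
          apply Finset.sum_le_sum; intro j hj
          have hj' := (Finset.mem_Ico.1 hj).1
          have : (N:ℝ)+1 ≤ (j:ℝ)+1 := by
            have : (N:ℝ) ≤ j := by exact_mod_cast hj'
            linarith
          apply one_div_le_one_div_of_le (by positivity) this
      _ = ((m:ℝ)+1) * (1/((N:ℝ)+1)) := by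
          rw [Finset.sum_const, Nat.card_Ico]
          have : N+m+1-N = m+1 := by omega
          rw [this]; push_cast; ring
  · have := tendsto_one_div_add_atTop_nhds_zero_nat.const_mul ((m:ℝ)+1)
    simpa using this

lemma hasSum_tele (m : ℕ) :
    HasSum (fun n : ℕ => 1/((n:ℝ)+1) - 1/((n:ℝ)+(m:ℝ)+2)) (H (m+1)) := by
  rw [hasSum_iff_tendsto_nat_of_nonneg]
  · have heq : (fun N : ℕ => ∑ n ∈ Finset.range N, (1/((n:ℝ)+1) - 1/((n:ℝ)+(m:ℝ)+2)))
        = fun N => H N + H (m+1) - H (N+m+1) := by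
      funext N; exact partial_sum m N
    rw [heq]
    have := (tendsto_diff m).const_sub (H (m+1))
    simp only [sub_zero] at this
    convert this using 2 with N
    ring
  · intro n
    have h : 1/((n:ℝ)+(m:ℝ)+2) ≤ 1/((n:ℝ)+1) := by
      apply one_div_le_one_div_of_le (by positivity)
      have : (0:ℝ) ≤ m := by positivity
      linarith
    linarith

noncomputable def f (p : ℕ × ℕ) : ℝ :=
  1/(((p.1:ℝ)+1) * ((p.2:ℝ)+1) * ((p.1:ℝ)+(p.2:ℝ)+2))

lemma hasSum_row (m : ℕ) :
    HasSum (fun n : ℕ => f (m, n)) (H (m+1) / ((m:ℝ)+1)^2) := by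
  have h := (hasSum_tele m).mul_left (1/((m:ℝ)+1)^2)
  have e1 : H (m+1) / ((m:ℝ)+1)^2 = 1/((m:ℝ)+1)^2 * H (m+1) := by ring
  rw [e1]
  have e2 : (fun n : ℕ => f (m, n))
      = fun n : ℕ => 1/((m:ℝ)+1)^2 * (1/((n:ℝ)+1) - 1/((n:ℝ)+(m:ℝ)+2)) := by
    funext n
    unfold f
    have hm : ((m:ℝ)+1) ≠ 0 := by positivity
    have hn : ((n:ℝ)+1) ≠ 0 := by positivity
    have hmn : ((n:ℝ)+(m:ℝ)+2) ≠ 0 := by positivity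
    field_simp
    ring
  rw [e2]
  exact h


lemma H_le_sqrt (n : ℕ) : H n ≤ 2 * Real.sqrt n := by
  induction n with
  | zero => simp [H]
  | succ n ih =>
    set s := Real.sqrt n with hs
    set t := Real.sqrt (n+1) with ht
    have hs0 : 0 ≤ s := Real.sqrt_nonneg _
    have ht0 : 0 ≤ t := Real.sqrt_nonneg _
    have hs2 : s^2 = n := Real.sq_sqrt (by positivity)
    have ht2 : t^2 = (n:ℝ)+1 := by
      rw [ht]
      push_cast
      exact Real.sq_sqrt (by positivity)
    have hst : s ≤ t := Real.sqrt_le_sqrt (by push_cast; linarith)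
    have ht1 : 1 ≤ t := by nlinarith
    have key : 1/((n:ℝ)+1) ≤ 2*(t - s) := by
      rw [div_le_iff₀ (by positivity)]
      have h1 : (t - s) * (t + s) = 1 := by nlinarith
      have h2 : (0:ℝ) ≤ 2*t^2 - t - s := by nlinarith
      nlinarith [mul_nonneg (sub_nonneg.2 hst) h2]
    have hH := H_succ n
    have : ((n+1:ℕ):ℝ) = (n:ℝ)+1 := by push_cast; ring
    rw [hH, this]
    linarith

lemma summable_rpow32 : Summable (fun n : ℕ => 2 * ((n:ℝ)+1)^(-(3/2) : ℝ)) := by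
  apply Summable.mul_left
  have h : Summable (fun n : ℕ => ((n:ℝ))^(-(3/2) : ℝ)) :=
    Real.summable_nat_rpow.mpr (by norm_num)
  have := (summable_nat_add_iff 1).2 h
  apply this.congr
  intro n
  push_cast
  ring_nf

lemma rpow32_eq (x : ℝ) (hx : 0 < x) : x^(-(3/2) : ℝ) = Real.sqrt x / x^2 := by
  rw [show (-(3/2) : ℝ) = 1/2 + (-2) by norm_num, Real.rpow_add hx,
    Real.rpow_neg hx.le, ← Real.sqrt_eq_rpow]
  rw [show ((2:ℝ)) = ((2:ℕ):ℝ) by norm_num, Real.rpow_natCast]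
  ring

lemma summable_target : Summable (fun m : ℕ => H (m+1) / ((m:ℝ)+1)^2) := by
  apply Summable.of_nonneg_of_le _ _ summable_rpow32
  · intro m
    apply div_nonneg (H_nonneg _) (by positivity)
  · intro m
    have hx : (0:ℝ) < (m:ℝ)+1 := by positivity
    rw [rpow32_eq _ hx,
      show 2*(Real.sqrt ((m:ℝ)+1) / ((m:ℝ)+1)^2) = (2*Real.sqrt ((m:ℝ)+1))/((m:ℝ)+1)^2 by ring]
    have hb := H_le_sqrt (m+1)
    have hc : ((m+1:ℕ):ℝ) = (m:ℝ)+1 := by push_cast; ring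
    rw [hc] at hb
    gcongr

lemma f_nonneg (p : ℕ × ℕ) : 0 ≤ f p := by unfold f; positivity

lemma summable_f : Summable f := by
  rw [summable_prod_of_nonneg f_nonneg]
  constructor
  · intro m; exact (hasSum_row m).summable
  · apply Summable.congr summable_target
    intro m
    exact ((hasSum_row m).tsum_eq).symm

lemma tsum_f : ∑' p : ℕ × ℕ, f p = ∑' n : ℕ, H (n+1) / ((n:ℝ)+1)^2 := by
  rw [Summable.tsum_prod' summable_f (fun m => (hasSum_row m).summable)]
  congr 1
  funext m
  exact (hasSum_row m).tsum_eq

noncomputable def g (p : ℕ × ℕ) : ℝ :=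
  1/(((p.1:ℝ)+1) * ((p.1:ℝ)+(p.2:ℝ)+2)^2)

lemma g_nonneg (p : ℕ × ℕ) : 0 ≤ g p := by unfold g; positivity

lemma g_le_f (p : ℕ × ℕ) : g p ≤ f p := by
  unfold g f
  apply one_div_le_one_div_of_le (by positivity)
  have h1 : ((p.2:ℝ)+1) ≤ ((p.1:ℝ)+(p.2:ℝ)+2) := by
    have : (0:ℝ) ≤ p.1 := by positivity
    linarith
  have h2 : (0:ℝ) < (p.1:ℝ)+1 := by positivity
  have h3 : (0:ℝ) < (p.1:ℝ)+(p.2:ℝ)+2 := by positivity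
  nlinarith [mul_le_mul_of_nonneg_right (mul_le_mul_of_nonneg_left h1 h2.le) h3.le]

lemma gswap_le_f (p : ℕ × ℕ) : g p.swap ≤ f p := by
  unfold g f
  simp only [Prod.fst_swap, Prod.snd_swap]
  apply one_div_le_one_div_of_le (by positivity)
  have h1 : ((p.1:ℝ)+1) ≤ ((p.1:ℝ)+(p.2:ℝ)+2) := by
    have : (0:ℝ) ≤ p.2 := by positivity
    linarith
  have h2 : (0:ℝ) < (p.2:ℝ)+1 := by positivity
  have h3 : (0:ℝ) < (p.1:ℝ)+(p.2:ℝ)+2 := by positivity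
  nlinarith [mul_le_mul_of_nonneg_right (mul_le_mul_of_nonneg_left h1 h2.le) h3.le]

lemma summable_g : Summable g :=
  Summable.of_nonneg_of_le g_nonneg g_le_f summable_f

lemma summable_gswap : Summable (fun p : ℕ × ℕ => g p.swap) :=
  Summable.of_nonneg_of_le (fun p => g_nonneg _) gswap_le_f summable_f

lemma f_eq_g_add (p : ℕ × ℕ) : f p = g p + g p.swap := by
  unfold f g
  simp only [Prod.fst_swap, Prod.snd_swap]
  have h1 : ((p.1:ℝ)+1) ≠ 0 := by positivity
  have h2 : ((p.2:ℝ)+1) ≠ 0 := by positivity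
  have h3 : ((p.1:ℝ)+(p.2:ℝ)+2) ≠ 0 := by positivity
  field_simp
  ring

lemma tsum_f_eq_two_g : ∑' p : ℕ × ℕ, f p = 2 * ∑' p : ℕ × ℕ, g p := by
  have h1 : ∑' p : ℕ × ℕ, f p = ∑' p : ℕ × ℕ, (g p + g p.swap) := by
    congr 1; funext p; exact f_eq_g_add p
  rw [h1, Summable.tsum_add summable_g summable_gswap]
  have h2 : ∑' p : ℕ × ℕ, g p.swap = ∑' p : ℕ × ℕ, g p := by
    exact (Equiv.prodComm ℕ ℕ).tsum_eq g
  rw [h2]; ring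

lemma antidiag_sum (n : ℕ) :
    ∑ ij ∈ Finset.HasAntidiagonal.antidiagonal n, g ij = H (n+1) / ((n:ℝ)+2)^2 := by
  rw [Finset.Nat.sum_antidiagonal_eq_sum_range_succ_mk]
  have h : ∀ k ∈ Finset.range (n+1), g (k, n-k) = (1/((k:ℝ)+1)) / ((n:ℝ)+2)^2 := by
    intro k hk
    have hk' : k ≤ n := by
      have := Finset.mem_range.1 hk; omega
    unfold g
    have hc : ((n-k:ℕ):ℝ) = (n:ℝ) - (k:ℝ) := by
      exact Nat.cast_sub hk'
    simp only [hc]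
    rw [show (k:ℝ) + ((n:ℝ) - (k:ℝ)) + 2 = (n:ℝ)+2 by ring]
    field_simp
  rw [Finset.sum_congr rfl h, ← Finset.sum_div]
  congr 1

lemma tsum_g : ∑' p : ℕ × ℕ, g p = ∑' n : ℕ, H (n+1) / ((n:ℝ)+2)^2 := by
  rw [← (Finset.HasAntidiagonal.sigmaAntidiagonalEquivProd (A := ℕ)).tsum_eq g]
  have hsum : Summable (fun c : (n : ℕ) × {x // x ∈ Finset.HasAntidiagonal.antidiagonal n} =>
      g ((Finset.HasAntidiagonal.sigmaAntidiagonalEquivProd (A := ℕ)) c)) :=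
    (Equiv.summable_iff (Finset.HasAntidiagonal.sigmaAntidiagonalEquivProd (A := ℕ))).2 summable_g
  rw [Summable.tsum_sigma hsum]
  congr 1
  funext n
  have : ∑' (c : {x // x ∈ Finset.HasAntidiagonal.antidiagonal n}),
      g ((Finset.HasAntidiagonal.sigmaAntidiagonalEquivProd (A := ℕ)) ⟨n, c⟩)
      = ∑' (c : {x // x ∈ Finset.HasAntidiagonal.antidiagonal n}), g (c : ℕ × ℕ) := rfl
  rw [this, Finset.tsum_subtype, antidiag_sum]

lemma summable_B : Summable (fun n : ℕ => H (n+1) / ((n:ℝ)+2)^2) := by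
  apply Summable.of_nonneg_of_le _ _ summable_target
  · intro n; apply div_nonneg (H_nonneg _) (by positivity)
  · intro n
    apply div_le_div_of_nonneg_left (H_nonneg _) (by positivity)
    nlinarith [Nat.cast_nonneg (α := ℝ) n]

lemma summable_cube : Summable (fun n : ℕ => 1/((n:ℝ)+1)^3) := by
  have h : Summable (fun n : ℕ => 1/((n:ℝ))^3) :=
    Real.summable_one_div_nat_pow.mpr (by norm_num)
  have := (summable_nat_add_iff 1).2 h
  apply this.congr
  intro n
  push_cast
  ring_nf

lemma summable_cube2 : Summable (fun n : ℕ => 1/((n:ℝ)+2)^3) := by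
  have := (summable_nat_add_iff 1).2 summable_cube
  apply this.congr
  intro n
  push_cast
  ring_nf

lemma zeta3_split : zeta3 = 1 + ∑' n : ℕ, 1/((n:ℝ)+2)^3 := by
  unfold zeta3
  rw [Summable.tsum_eq_zero_add summable_cube]
  norm_num
  apply tsum_congr
  intro n
  push_cast
  ring_nf

theorem stmt0 : ∑' n : ℕ, H (n+1) / ((n:ℝ)+1)^2 = 2 * zeta3 := by
  set S := ∑' n : ℕ, H (n+1) / ((n:ℝ)+1)^2 with hS
  set B := ∑' n : ℕ, H (n+1) / ((n:ℝ)+2)^2 with hB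
  have hA : S = 2 * B := by
    rw [hS, hB, ← tsum_f, tsum_f_eq_two_g, tsum_g]
  have hsplit : S = 1 + (B + (zeta3 - 1)) := by
    rw [hS, Summable.tsum_eq_zero_add summable_target]
    congr 1
    · simp [H]
    · have h1 : ∀ n : ℕ, H (n+1+1) / ((↑(n+1):ℝ)+1)^2
          = H (n+1) / ((n:ℝ)+2)^2 + 1/((n:ℝ)+2)^3 := by
        intro n
        have h2 : H (n+1+1) = H (n+1) + 1/((n:ℝ)+2) := by
          rw [H_succ (n+1)]; push_cast; ring
        rw [h2]
        push_cast
        have h3 : ((n:ℝ)+2) ≠ 0 := by positivity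
        field_simp
        ring
      rw [tsum_congr h1, Summable.tsum_add summable_B summable_cube2]
      have h4 : ∑' n : ℕ, 1/((n:ℝ)+2)^3 = zeta3 - 1 := by
        rw [zeta3_split]; ring
      rw [h4]
  have hBz : B = zeta3 := by linarith
  rw [hA, hBz]
end

section
/- The alternating sum ∑_{n=1}^∞ (-1)^n H_n / n^2 equals -(5/8)ζ(3). -/
set_option maxHeartbeats 1000000


open scoped BigOperators
open Finset Filter

namespace Stmt4Aux

noncomputable def g (p : ℕ × ℕ) : ℝ :=
  1 / (((p.1:ℝ)+1) * (((p.2:ℝ)+1) * ((p.1:ℝ)+(p.2:ℝ)+2)))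

lemma g_nonneg (p : ℕ × ℕ) : 0 ≤ g p := by
  unfold g; positivity

noncomputable def b (n : ℕ) : ℝ := 1 / (((n:ℝ)+1) ^ ((3:ℝ)/2))

lemma summable_b : Summable b := by
  have h : Summable (fun n : ℕ => 1 / ((n:ℝ)) ^ ((3:ℝ)/2)) :=
    Real.summable_one_div_nat_rpow.2 (by norm_num)
  have := (summable_nat_add_iff 1).2 h
  refine this.congr fun n => ?_
  simp [b]

lemma g_le (p : ℕ × ℕ) : g p ≤ b p.1 * b p.2 := by
  obtain ⟨m, n⟩ := p
  set x : ℝ := (m:ℝ)+1 with hx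
  set y : ℝ := (n:ℝ)+1 with hy
  have hx0 : (0:ℝ) < x := by positivity
  have hy0 : (0:ℝ) < y := by positivity
  have hxy : (0:ℝ) < x * y := by positivity
  have hs : Real.sqrt (x*y) ≤ x + y := by
    have h1 : Real.sqrt (x*y) = Real.sqrt x * Real.sqrt y := Real.sqrt_mul hx0.le y
    nlinarith [sq_nonneg (Real.sqrt x - Real.sqrt y), Real.sq_sqrt hx0.le,
      Real.sq_sqrt hy0.le, Real.sqrt_nonneg x, Real.sqrt_nonneg y]
  have key : (x*y) ^ ((3:ℝ)/2) ≤ x * (y * (x + y)) := by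
    have h32 : (x*y) ^ ((3:ℝ)/2) = (x*y) ^ (1:ℝ) * (x*y) ^ ((1:ℝ)/2) := by
      rw [← Real.rpow_add hxy]; norm_num
    rw [h32, Real.rpow_one, ← Real.sqrt_eq_rpow]
    calc x * y * Real.sqrt (x*y) ≤ x * y * (x + y) := by
          exact mul_le_mul_of_nonneg_left hs hxy.le
      _ = x * (y * (x + y)) := by ring
  have hbb : b m * b n = 1 / ((x*y) ^ ((3:ℝ)/2)) := by
    rw [b, b, ← hx, ← hy, div_mul_div_comm, one_mul, ← Real.mul_rpow hx0.le hy0.le]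
  rw [g, hbb]
  have hmn2 : (m:ℝ) + (n:ℝ) + 2 = x + y := by rw [hx, hy]; ring
  simp only [← hx, ← hy, hmn2]
  apply one_div_le_one_div_of_le
  · positivity
  · exact key

lemma summable_g : Summable g :=
  Summable.of_nonneg_of_le g_nonneg g_le (summable_b.mul_of_nonneg summable_b
    (fun n => by unfold b; positivity) (fun n => by unfold b; positivity))


lemma H_mono_diff (N m : ℕ) : H (N + m) - H N = ∑ k ∈ Finset.Ico N (N+m), (1:ℝ)/(k+1) := by
  rw [H, H, ← Finset.sum_Ico_eq_sub _ (Nat.le_add_right N m)]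

lemma tendsto_H_diff (m : ℕ) :
    Tendsto (fun N : ℕ => H (N + m) - H N) atTop (nhds 0) := by
  have hb : ∀ N : ℕ, H (N + m) - H N ≤ (m:ℝ) * (1/((N:ℝ)+1)) := by
    intro N
    rw [H_mono_diff]
    calc ∑ k ∈ Finset.Ico N (N+m), (1:ℝ)/(k+1)
        ≤ ∑ _k ∈ Finset.Ico N (N+m), (1:ℝ)/((N:ℝ)+1) := by
          apply Finset.sum_le_sum
          intro k hk
          have : (N:ℝ) ≤ (k:ℝ) := by
            exact_mod_cast (Finset.mem_Ico.1 hk).1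
          apply one_div_le_one_div_of_le (by positivity) (by linarith)
      _ = (m:ℝ) * (1/((N:ℝ)+1)) := by
          rw [Finset.sum_const, Nat.card_Ico]
          simp [Nat.add_sub_cancel_left]
  have h0 : ∀ N : ℕ, 0 ≤ H (N + m) - H N := by
    intro N
    rw [H_mono_diff]
    apply Finset.sum_nonneg; intro k _; positivity
  have hlim : Tendsto (fun N : ℕ => (m:ℝ) * (1/((N:ℝ)+1))) atTop (nhds 0) := by
    simpa using tendsto_one_div_add_atTop_nhds_zero_nat.const_mul (m:ℝ)
  exact squeeze_zero h0 hb hlim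

lemma hasSum_tele (m : ℕ) :
    HasSum (fun n : ℕ => 1/((n:ℝ)+1) - 1/((n:ℝ)+(m:ℝ)+2)) (H (m+1)) := by
  have hnn : ∀ n : ℕ, 0 ≤ 1/((n:ℝ)+1) - 1/((n:ℝ)+(m:ℝ)+2) := by
    intro n
    have : 1/((n:ℝ)+(m:ℝ)+2) ≤ 1/((n:ℝ)+1) := by
      apply one_div_le_one_div_of_le (by positivity)
      have : (0:ℝ) ≤ (m:ℝ) := Nat.cast_nonneg m
      linarith
    linarith
  rw [hasSum_iff_tendsto_nat_of_nonneg hnn]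
  have hps : ∀ N : ℕ, ∑ n ∈ Finset.range N, (1/((n:ℝ)+1) - 1/((n:ℝ)+(m:ℝ)+2))
      = H (m+1) - (H (N + (m+1)) - H N) := by
    intro N
    rw [Finset.sum_sub_distrib]
    have h1 : ∑ n ∈ Finset.range N, (1:ℝ)/((n:ℝ)+1) = H N := by
      rw [H]
    have h2 : ∑ n ∈ Finset.range N, (1:ℝ)/((n:ℝ)+(m:ℝ)+2) = H (N + (m+1)) - H (m+1) := by
      rw [H, H, ← Finset.sum_Ico_eq_sub _ (Nat.le_add_left (m+1) N)]
      rw [Finset.sum_Ico_eq_sum_range]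
      simp only [Nat.add_sub_cancel]
      apply Finset.sum_congr rfl
      intro n _
      push_cast
      ring_nf
    rw [h1, h2]; ring
  simp only [hps]
  have := (tendsto_H_diff (m+1)).const_sub (H (m+1))
  simpa using this

lemma g_row (m : ℕ) : HasSum (fun n => g (m, n)) (H (m+1) / ((m:ℝ)+1)^2) := by
  have h := (hasSum_tele m).div_const (((m:ℝ)+1)^2)
  have he : (fun n : ℕ => g (m,n))
      = fun n : ℕ => (1/((n:ℝ)+1) - 1/((n:ℝ)+(m:ℝ)+2)) / ((m:ℝ)+1)^2 := by
    funext n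
    rw [g]
    have hm : ((m:ℝ)+1) ≠ 0 := by positivity
    have hn : ((n:ℝ)+1) ≠ 0 := by positivity
    have hmn : ((n:ℝ)+(m:ℝ)+2) ≠ 0 := by positivity
    field_simp
    ring
  rw [he]
  exact h


lemma summable_sign_g (c : ℕ × ℕ → ℝ) (hc : ∀ p, |c p| ≤ 1) :
    Summable (fun p : ℕ × ℕ => c p * g p) := by
  rw [← summable_abs_iff]
  apply Summable.of_nonneg_of_le (fun p => abs_nonneg _) _ summable_g
  intro p
  rw [abs_mul, abs_of_nonneg (g_nonneg p)]
  calc |c p| * g p ≤ 1 * g p := mul_le_mul_of_nonneg_right (hc p) (g_nonneg p)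
    _ = g p := one_mul _

lemma abs_neg_one_pow (k : ℕ) : |(-1:ℝ)^k| ≤ 1 := by
  rw [abs_pow, abs_neg, abs_one, one_pow]

lemma summable_E : Summable (fun m : ℕ => H (m+1) / ((m:ℝ)+1)^2) := by
  have h := (summable_prod_of_nonneg g_nonneg).1 summable_g
  refine h.2.congr fun m => ?_
  exact (g_row m).tsum_eq

-- U via rows
lemma U_rows : ∑' p : ℕ × ℕ, g p = ∑' m : ℕ, H (m+1) / ((m:ℝ)+1)^2 := by
  rw [Summable.tsum_prod summable_g]
  exact tsum_congr fun m => (g_row m).tsum_eq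

-- V via rows
lemma V_rows : ∑' p : ℕ × ℕ, (-1:ℝ)^(p.1+1) * g p
    = ∑' m : ℕ, (-1:ℝ)^(m+1) * H (m+1) / ((m:ℝ)+1)^2 := by
  have hs : Summable (fun p : ℕ × ℕ => (-1:ℝ)^(p.1+1) * g p) :=
    summable_sign_g _ (fun p => abs_neg_one_pow _)
  rw [Summable.tsum_prod hs]
  refine tsum_congr fun m => ?_
  have := ((g_row m).mul_left ((-1:ℝ)^(m+1))).tsum_eq
  rw [this, mul_div_assoc]

-- columns = rows by symmetry
lemma g_symm (m n : ℕ) : g (n, m) = g (m, n) := by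
  rw [g, g]; push_cast; ring_nf

lemma V_col : ∑' p : ℕ × ℕ, (-1:ℝ)^(p.2+1) * g p
    = ∑' p : ℕ × ℕ, (-1:ℝ)^(p.1+1) * g p := by
  rw [← (Equiv.prodComm ℕ ℕ).tsum_eq (fun p : ℕ × ℕ => (-1:ℝ)^(p.2+1) * g p)]
  refine tsum_congr fun p => ?_
  obtain ⟨m, n⟩ := p
  simp [Equiv.prodComm, g_symm]


lemma reflect_sum (N : ℕ) :
    ∑ k ∈ Finset.range (N+1), (1:ℝ)/((N:ℝ)-(k:ℝ)+1) = H (N+1) := by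
  have h := Finset.sum_range_reflect (fun j => (1:ℝ)/((j:ℝ)+1)) (N+1)
  rw [H, ← h]
  apply Finset.sum_congr rfl
  intro k hk
  have hk' : k ≤ N := Nat.lt_succ_iff.mp (Finset.mem_range.1 hk)
  have hc : ((N + 1 - 1 - k : ℕ):ℝ) = (N:ℝ) - (k:ℝ) := by
    simp only [Nat.add_sub_cancel]
    push_cast [Nat.cast_sub hk']
    ring
  rw [hc]

lemma finsum_pf (N : ℕ) :
    ∑ k ∈ Finset.range (N+1), 1/(((k:ℝ)+1)*(((N:ℝ)-(k:ℝ)+1))) = 2 * H (N+1) / ((N:ℝ)+2) := by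
  have hstep : ∀ k ∈ Finset.range (N+1),
      1/(((k:ℝ)+1)*(((N:ℝ)-(k:ℝ)+1)))
        = (1/((N:ℝ)+2)) * ((1:ℝ)/((k:ℝ)+1) + (1:ℝ)/((N:ℝ)-(k:ℝ)+1)) := by
    intro k hk
    have hk' : (k:ℝ) ≤ (N:ℝ) := by
      exact_mod_cast Nat.lt_succ_iff.mp (Finset.mem_range.1 hk)
    have h1 : ((k:ℝ)+1) ≠ 0 := by positivity
    have h2 : ((N:ℝ)-(k:ℝ)+1) ≠ 0 := by
      have : (0:ℝ) ≤ (N:ℝ)-(k:ℝ) := by linarith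
      positivity
    have h3 : ((N:ℝ)+2) ≠ 0 := by positivity
    field_simp
    ring
  rw [Finset.sum_congr rfl hstep, ← Finset.mul_sum, Finset.sum_add_distrib]
  rw [reflect_sum]
  have : ∑ k ∈ Finset.range (N+1), (1:ℝ)/((k:ℝ)+1) = H (N+1) := by rw [H]
  rw [this]
  ring

lemma antidiag_eval (c : ℕ → ℝ) (hc : ∀ N, |c N| ≤ 1) :
    (∑' p : ℕ × ℕ, c (p.1 + p.2) * g p
      = ∑' N : ℕ, c N * (2 * H (N+1) / ((N:ℝ)+2)^2)) := by
  set f : ℕ × ℕ → ℝ := fun p => c (p.1 + p.2) * g p with hf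
  have hsf : Summable f := summable_sign_g _ (fun p => hc _)
  have hmain : ∑' p : ℕ × ℕ, f p
      = ∑' x : Σ n : ℕ, (Finset.HasAntidiagonal.antidiagonal n : Finset (ℕ × ℕ)),
          f (Finset.HasAntidiagonal.sigmaAntidiagonalEquivProd x) :=
    ((Finset.HasAntidiagonal.sigmaAntidiagonalEquivProd (A := ℕ)).tsum_eq f).symm
  have hsig : Summable (fun x : Σ n : ℕ, (Finset.HasAntidiagonal.antidiagonal n : Finset (ℕ × ℕ)) =>
      f (Finset.HasAntidiagonal.sigmaAntidiagonalEquivProd x)) :=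
    (Equiv.summable_iff _).2 hsf
  rw [hmain, Summable.tsum_sigma hsig]
  refine tsum_congr fun N => ?_
  have h1 : ∑' (q : (Finset.HasAntidiagonal.antidiagonal N : Finset (ℕ × ℕ))),
      f (Finset.HasAntidiagonal.sigmaAntidiagonalEquivProd ⟨N, q⟩)
      = ∑ q ∈ Finset.HasAntidiagonal.antidiagonal N, f q := by
    rw [← Finset.tsum_subtype]
    rfl
  rw [h1, Finset.Nat.sum_antidiagonal_eq_sum_range_succ_mk]
  have hterm : ∀ k ∈ Finset.range (N+1),
      f (k, N - k) = c N * ((1/((N:ℝ)+2)) * (1/(((k:ℝ)+1)*(((N:ℝ)-(k:ℝ)+1))))) := by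
    intro k hk
    have hk' : k ≤ N := Nat.lt_succ_iff.mp (Finset.mem_range.1 hk)
    have hadd : k + (N - k) = N := Nat.add_sub_cancel' hk'
    have hcast : ((N - k : ℕ):ℝ) = (N:ℝ) - (k:ℝ) := by
      push_cast [Nat.cast_sub hk']; ring
    have h2 : (0:ℝ) < (N:ℝ)-(k:ℝ)+1 := by
      have : (k:ℝ) ≤ (N:ℝ) := by exact_mod_cast hk'
      linarith
    rw [hf]
    simp only [hadd, g, hcast]
    congr 1
    rw [div_mul_div_comm, one_mul]
    congr 1
    ring
  rw [Finset.sum_congr rfl hterm, ← Finset.mul_sum, ← Finset.mul_sum, finsum_pf]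
  congr 1
  rw [div_mul_div_comm, one_mul, sq]


lemma H_nonneg (n : ℕ) : 0 ≤ H n := by
  rw [H]; apply Finset.sum_nonneg; intro j _; positivity

lemma H_one : H 1 = 1 := by simp [H]

lemma H_succ (n : ℕ) : H (n+1) = H n + 1/((n:ℝ)+1) := by
  rw [H, H, Finset.sum_range_succ]

lemma summable_z : Summable (fun n : ℕ => (1:ℝ)/((n:ℝ)+1)^3) := by
  have h : Summable (fun n : ℕ => 1/((n:ℝ))^(3:ℕ)) :=
    Real.summable_one_div_nat_pow.2 (by norm_num)
  have h2 := (summable_nat_add_iff 1).2 h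
  refine h2.congr fun n => ?_
  push_cast
  ring_nf

lemma summable_S : Summable (fun m : ℕ => (-1:ℝ)^(m+1) * H (m+1) / ((m:ℝ)+1)^2) := by
  rw [← summable_abs_iff]
  refine summable_E.congr fun m => ?_
  rw [abs_div, abs_mul, abs_pow, abs_neg, abs_one, one_pow, one_mul,
    abs_of_nonneg (H_nonneg _), abs_of_nonneg (by positivity : (0:ℝ) ≤ ((m:ℝ)+1)^2)]

-- shifted summabilities
lemma summable_E1 : Summable (fun N : ℕ => H (N+2) / ((N:ℝ)+2)^2) := by
  have h := (summable_nat_add_iff 1).2 summable_E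
  refine h.congr fun N => ?_
  push_cast
  rw [show ((N:ℝ)+1+1) = (N:ℝ)+2 from by ring]

lemma summable_z1 : Summable (fun N : ℕ => (1:ℝ)/((N:ℝ)+2)^3) := by
  have h := (summable_nat_add_iff 1).2 summable_z
  refine h.congr fun N => ?_
  push_cast
  rw [show ((N:ℝ)+1+1) = (N:ℝ)+2 from by ring]

lemma summable_S1 : Summable (fun N : ℕ => (-1:ℝ)^N * (H (N+2) / ((N:ℝ)+2)^2)) := by
  rw [← summable_abs_iff]
  refine summable_E1.congr fun N => ?_
  rw [abs_mul, abs_pow, abs_neg, abs_one, one_pow, one_mul,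
    abs_of_nonneg (div_nonneg (H_nonneg _) (by positivity : (0:ℝ) ≤ ((N:ℝ)+2)^2))]

lemma summable_z1s : Summable (fun N : ℕ => (-1:ℝ)^N * ((1:ℝ)/((N:ℝ)+2)^3)) := by
  rw [← summable_abs_iff]
  refine summable_z1.congr fun N => ?_
  rw [abs_mul, abs_pow, abs_neg, abs_one, one_pow, one_mul,
    abs_of_nonneg (by positivity : (0:ℝ) ≤ (1:ℝ)/((N:ℝ)+2)^3)]

lemma tsum_z_shift : ∑' N : ℕ, (1:ℝ)/((N:ℝ)+2)^3 = zeta3 - 1 := by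
  have h := Summable.tsum_eq_zero_add summable_z
  have h0 : (1:ℝ)/(((0:ℕ):ℝ)+1)^3 = 1 := by norm_num
  have h1 : ∑' N : ℕ, (1:ℝ)/(((N+1:ℕ):ℝ)+1)^3 = ∑' N : ℕ, (1:ℝ)/((N:ℝ)+2)^3 := by
    refine tsum_congr fun N => ?_
    push_cast
    rw [show ((N:ℝ)+1+1) = (N:ℝ)+2 from by ring]
  rw [zeta3, h, h0, h1]
  ring

lemma tsum_E_shift : ∑' N : ℕ, H (N+2) / ((N:ℝ)+2)^2
    = (∑' m : ℕ, H (m+1) / ((m:ℝ)+1)^2) - 1 := by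
  have h := Summable.tsum_eq_zero_add summable_E
  have h0 : H (0+1) / (((0:ℕ):ℝ)+1)^2 = 1 := by rw [H_one]; norm_num
  have h1 : ∑' N : ℕ, H (N+1+1) / (((N+1:ℕ):ℝ)+1)^2 = ∑' N : ℕ, H (N+2) / ((N:ℝ)+2)^2 := by
    refine tsum_congr fun N => ?_
    push_cast
    rw [show ((N:ℝ)+1+1) = (N:ℝ)+2 from by ring]
  rw [h, h0, h1]
  ring

lemma tsum_S_shift : ∑' N : ℕ, (-1:ℝ)^N * (H (N+2) / ((N:ℝ)+2)^2)
    = (∑' m : ℕ, (-1:ℝ)^(m+1) * H (m+1) / ((m:ℝ)+1)^2) + 1 := by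
  have h := Summable.tsum_eq_zero_add summable_S
  have h0 : (-1:ℝ)^(0+1) * H (0+1) / (((0:ℕ):ℝ)+1)^2 = -1 := by rw [H_one]; norm_num
  have h1 : ∑' N : ℕ, (-1:ℝ)^(N+1+1) * H (N+1+1) / (((N+1:ℕ):ℝ)+1)^2
      = ∑' N : ℕ, (-1:ℝ)^N * (H (N+2) / ((N:ℝ)+2)^2) := by
    refine tsum_congr fun N => ?_
    have hp : (-1:ℝ)^(N+1+1) = (-1:ℝ)^N := by
      rw [pow_succ, pow_succ]; ring
    rw [hp]
    push_cast
    rw [show ((N:ℝ)+1+1) = (N:ℝ)+2 from by ring, mul_div_assoc]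
  rw [h, h0, h1]
  ring

lemma summable_a3 : Summable (fun k : ℕ => (-1:ℝ)^k * ((1:ℝ)/((k:ℝ)+1)^3)) := by
  rw [← summable_abs_iff]
  refine summable_z.congr fun k => ?_
  rw [abs_mul, abs_pow, abs_neg, abs_one, one_pow, one_mul,
    abs_of_nonneg (by positivity : (0:ℝ) ≤ (1:ℝ)/((k:ℝ)+1)^3)]

lemma two_mul_inj : Function.Injective (fun k : ℕ => 2*k) := by
  intro a b h
  dsimp only at h
  omega

lemma z_odd (k : ℕ) : (1:ℝ)/(((2*k+1:ℕ):ℝ)+1)^3 = (1/8) * ((1:ℝ)/((k:ℝ)+1)^3) := by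
  push_cast
  have h1 : ((2:ℝ)*(k:ℝ)+1+1) = 2*((k:ℝ)+1) := by ring
  rw [h1, mul_pow]
  norm_num
  ring

lemma tsum_z_odd : ∑' k : ℕ, (1:ℝ)/(((2*k+1:ℕ):ℝ)+1)^3 = zeta3 / 8 := by
  have : ∀ k : ℕ, (1:ℝ)/(((2*k+1:ℕ):ℝ)+1)^3 = (1/8) * ((1:ℝ)/((k:ℝ)+1)^3) := z_odd
  rw [tsum_congr this, tsum_mul_left, zeta3]
  ring

lemma A3_eq : ∑' k : ℕ, (-1:ℝ)^k * ((1:ℝ)/((k:ℝ)+1)^3) = 3/4 * zeta3 := by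
  set z : ℕ → ℝ := fun k => (1:ℝ)/((k:ℝ)+1)^3 with hz
  set a3 : ℕ → ℝ := fun k => (-1:ℝ)^k * z k with ha3
  have hze : Summable (fun k => z (2*k)) := summable_z.comp_injective two_mul_inj
  have hzo : Summable (fun k => z (2*k+1)) := by
    refine Summable.congr ?_ (fun k => (z_odd k).symm)
    exact (summable_z.mul_left (1/8))
  have hzsplit := tsum_even_add_odd hze hzo
  have hae : Summable (fun k => a3 (2*k)) := by
    refine hze.congr fun k => ?_
    rw [ha3]
    simp only
    rw [pow_mul, neg_one_sq, one_pow, one_mul]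
  have hao : Summable (fun k => a3 (2*k+1)) := by
    refine (hzo.neg).congr fun k => ?_
    rw [ha3]
    simp only
    rw [pow_succ, pow_mul, neg_one_sq, one_pow, one_mul, neg_one_mul]
  have hasplit := tsum_even_add_odd hae hao
  have he_eq : ∑' k, a3 (2*k) = ∑' k, z (2*k) := by
    refine tsum_congr fun k => ?_
    rw [ha3]; simp only; rw [pow_mul, neg_one_sq, one_pow, one_mul]
  have ho_eq : ∑' k, a3 (2*k+1) = - ∑' k, z (2*k+1) := by
    rw [← tsum_neg]
    refine tsum_congr fun k => ?_
    rw [ha3]; simp only; rw [pow_succ, pow_mul, neg_one_sq, one_pow, one_mul, neg_one_mul]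
  have hzo_val : ∑' k, z (2*k+1) = zeta3 / 8 := by
    rw [← tsum_z_odd]
  have hz_val : ∑' k, z k = zeta3 := by rw [zeta3, hz]
  rw [hz_val] at hzsplit
  have heven : ∑' k, z (2*k) = zeta3 - zeta3/8 := by linarith
  have hfin : ∑' k, a3 k = 3/4 * zeta3 := by
    rw [← hasplit, he_eq, ho_eq, hzo_val, heven]
    ring
  rw [← hfin, ha3]

lemma tsum_a3_shift : ∑' N : ℕ, (-1:ℝ)^N * ((1:ℝ)/((N:ℝ)+2)^3)
    = 1 - 3/4 * zeta3 := by
  have h := Summable.tsum_eq_zero_add summable_a3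
  rw [A3_eq] at h
  have h0 : (-1:ℝ)^(0:ℕ) * ((1:ℝ)/(((0:ℕ):ℝ)+1)^3) = 1 := by norm_num
  have h1 : ∑' N : ℕ, (-1:ℝ)^(N+1) * ((1:ℝ)/(((N+1:ℕ):ℝ)+1)^3)
      = - ∑' N : ℕ, (-1:ℝ)^N * ((1:ℝ)/((N:ℝ)+2)^3) := by
    rw [← tsum_neg]
    refine tsum_congr fun N => ?_
    rw [pow_succ]
    push_cast
    ring_nf
  rw [h0, h1] at h
  linarith


lemma H_shift_pt (N : ℕ) : H (N+1) = H (N+2) - 1/((N:ℝ)+2) := by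
  have h := H_succ (N+1)
  push_cast at h
  rw [show ((N:ℝ)+1+1) = (N:ℝ)+2 from by ring] at h
  linarith

lemma E_val : ∑' m : ℕ, H (m+1) / ((m:ℝ)+1)^2 = 2 * zeta3 := by
  have hU2 : ∑' p : ℕ × ℕ, g p = ∑' N : ℕ, (1:ℝ) * (2 * H (N+1) / ((N:ℝ)+2)^2) := by
    have h := antidiag_eval (fun _ => (1:ℝ)) (fun N => by norm_num)
    rw [← h]
    exact tsum_congr fun p => (one_mul _).symm
  have hterm : ∀ N : ℕ, (1:ℝ) * (2 * H (N+1) / ((N:ℝ)+2)^2)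
      = 2 * (H (N+2) / ((N:ℝ)+2)^2) - 2 * ((1:ℝ)/((N:ℝ)+2)^3) := by
    intro N
    rw [H_shift_pt N]
    have h2 : ((N:ℝ)+2) ≠ 0 := by positivity
    field_simp
  rw [tsum_congr hterm, Summable.tsum_sub (summable_E1.mul_left 2) (summable_z1.mul_left 2),
    tsum_mul_left, tsum_mul_left, tsum_E_shift, tsum_z_shift, U_rows] at hU2
  linarith

lemma T_val : ∑' p : ℕ × ℕ, (-1:ℝ)^(p.1+p.2) * g p
    = 2 * (∑' m : ℕ, (-1:ℝ)^(m+1) * H (m+1) / ((m:ℝ)+1)^2) + 3/2 * zeta3 := by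
  have h := antidiag_eval (fun N => (-1:ℝ)^N) (fun N => abs_neg_one_pow N)
  have hterm : ∀ N : ℕ, (-1:ℝ)^N * (2 * H (N+1) / ((N:ℝ)+2)^2)
      = 2 * ((-1:ℝ)^N * (H (N+2) / ((N:ℝ)+2)^2)) - 2 * ((-1:ℝ)^N * ((1:ℝ)/((N:ℝ)+2)^3)) := by
    intro N
    rw [H_shift_pt N]
    have h2 : ((N:ℝ)+2) ≠ 0 := by positivity
    field_simp
  rw [h, tsum_congr hterm, Summable.tsum_sub (summable_S1.mul_left 2) (summable_z1s.mul_left 2),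
    tsum_mul_left, tsum_mul_left, tsum_S_shift, tsum_a3_shift]
  ring

lemma neg_pow_combine (a b : ℕ) : ((-1:ℝ))^(a+1) * (-1)^(b+1) = (-1)^(a+b) := by
  rw [← pow_add, show a+1+(b+1) = (a+b)+2 from by ring, pow_add, neg_one_sq, mul_one]

lemma parity_rel :
    (∑' p : ℕ × ℕ, g p) + (∑' p : ℕ × ℕ, (-1:ℝ)^(p.1+1) * g p)
      + (∑' p : ℕ × ℕ, (-1:ℝ)^(p.2+1) * g p) + (∑' p : ℕ × ℕ, (-1:ℝ)^(p.1+p.2) * g p)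
    = (∑' p : ℕ × ℕ, g p) / 2 := by
  have s0 := summable_g
  have s1 : Summable (fun p : ℕ × ℕ => (-1:ℝ)^(p.1+1) * g p) :=
    summable_sign_g _ (fun p => abs_neg_one_pow _)
  have s2 : Summable (fun p : ℕ × ℕ => (-1:ℝ)^(p.2+1) * g p) :=
    summable_sign_g _ (fun p => abs_neg_one_pow _)
  have s3 : Summable (fun p : ℕ × ℕ => (-1:ℝ)^(p.1+p.2) * g p) :=
    summable_sign_g _ (fun p => abs_neg_one_pow _)
  have hsum : (∑' p : ℕ × ℕ, g p) + (∑' p : ℕ × ℕ, (-1:ℝ)^(p.1+1) * g p)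
      + (∑' p : ℕ × ℕ, (-1:ℝ)^(p.2+1) * g p) + (∑' p : ℕ × ℕ, (-1:ℝ)^(p.1+p.2) * g p)
      = ∑' p : ℕ × ℕ, (1 + (-1:ℝ)^(p.1+1)) * ((1 + (-1:ℝ)^(p.2+1)) * g p) := by
    rw [← Summable.tsum_add s0 s1, ← Summable.tsum_add (s0.add s1) s2, ← Summable.tsum_add ((s0.add s1).add s2) s3]
    refine tsum_congr fun p => ?_
    have hkey := neg_pow_combine p.1 p.2
    rw [← hkey]
    ring
  set i : ℕ × ℕ → ℕ × ℕ := fun q => (2*q.1+1, 2*q.2+1) with hi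
  have hinj : Function.Injective i := by
    intro a b hab
    rw [hi] at hab
    simp only [Prod.mk.injEq] at hab
    have h1 : a.1 = b.1 := by omega
    have h2 : a.2 = b.2 := by omega
    exact Prod.ext h1 h2
  have hsupp : ∀ p : ℕ × ℕ, p ∉ Set.range i →
      (1 + (-1:ℝ)^(p.1+1)) * ((1 + (-1:ℝ)^(p.2+1)) * g p) = 0 := by
    intro p hp
    rcases Nat.even_or_odd p.1 with h1 | h1
    · obtain ⟨a, ha⟩ := h1
      have hx : (-1:ℝ)^(p.1+1) = -1 := by
        rw [ha, show a+a+1 = 2*a+1 from by ring, pow_succ, pow_mul, neg_one_sq, one_pow, one_mul]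
      rw [hx]
      norm_num
    · rcases Nat.even_or_odd p.2 with h2 | h2
      · obtain ⟨b, hb⟩ := h2
        have hx : (-1:ℝ)^(p.2+1) = -1 := by
          rw [hb, show b+b+1 = 2*b+1 from by ring, pow_succ, pow_mul, neg_one_sq, one_pow, one_mul]
        rw [hx]
        norm_num
      · exfalso
        apply hp
        obtain ⟨a, ha⟩ := h1
        obtain ⟨b, hb⟩ := h2
        refine ⟨(a, b), ?_⟩
        rw [hi]
        exact Prod.ext ha.symm hb.symm
  have hsupp' : Function.support
      (fun p : ℕ × ℕ => (1 + (-1:ℝ)^(p.1+1)) * ((1 + (-1:ℝ)^(p.2+1)) * g p)) ⊆ Set.range i := by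
    intro p hps
    by_contra hc
    exact hps (hsupp p hc)
  have htrans := Function.Injective.tsum_eq hinj hsupp'
  have hval : ∀ q : ℕ × ℕ,
      (1 + (-1:ℝ)^((i q).1+1)) * ((1 + (-1:ℝ)^((i q).2+1)) * g (i q)) = g q / 2 := by
    intro q
    obtain ⟨a, b⟩ := q
    rw [hi]
    simp only
    have e1 : (-1:ℝ)^(2*a+1+1) = 1 := by
      rw [show 2*a+1+1 = 2*(a+1) from by ring, pow_mul, neg_one_sq, one_pow]
    have e2 : (-1:ℝ)^(2*b+1+1) = 1 := by
      rw [show 2*b+1+1 = 2*(b+1) from by ring, pow_mul, neg_one_sq, one_pow]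
    have e3 : g (2*a+1, 2*b+1) = g (a, b) / 8 := by
      rw [g, g]
      push_cast
      have h1 : ((a:ℝ)+1) ≠ 0 := by positivity
      have h2 : ((b:ℝ)+1) ≠ 0 := by positivity
      have h3 : ((a:ℝ)+(b:ℝ)+2) ≠ 0 := by positivity
      field_simp
      ring
    rw [e1, e2, e3]
    ring
  rw [hsum, ← htrans, tsum_congr hval]
  rw [tsum_div_const]

end Stmt4Aux


theorem stmt4 : ∑' n : ℕ, (-1:ℝ)^(n+1) * H (n+1) / ((n:ℝ)+1)^2 = -(5/8) * zeta3 := by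
  have hU : ∑' p : ℕ × ℕ, Stmt4Aux.g p = 2 * zeta3 := Stmt4Aux.U_rows.trans Stmt4Aux.E_val
  have hV := Stmt4Aux.V_rows
  have hVc := Stmt4Aux.V_col
  have hT := Stmt4Aux.T_val
  have hP := Stmt4Aux.parity_rel
  rw [hU, hV, hVc, hV, hT] at hP
  linarith
end

section
/- The alternating central binomial sum ∑_{n=1}^∞ (-1)^{n+1} (n!)² / (n³ (2n)!) equals (2/5)ζ(3). Equivalently, ∑_{n=1}^∞ (-1)^n ((n-1)!)² / (n² (2n-1)!) = -(4/5)ζ(3). -/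
open scoped BigOperators
open Finset

noncomputable def aa (N j : ℕ) : ℝ :=
  (-1)^j * (Nat.factorial (j+1) : ℝ)^2 * (Nat.factorial (N - (j+1)) : ℝ) /
    (2 * ((j:ℝ)+1)^3 * (Nat.factorial (N + (j+1)) : ℝ))

noncomputable def bb (N k : ℕ) : ℝ :=
  (-1)^k * (Nat.factorial k : ℝ)^2 * (Nat.factorial (N - k) : ℝ) /
    (((N:ℝ)+1)^2 * (Nat.factorial (N + 1 + k) : ℝ))

noncomputable def tt (n : ℕ) : ℝ :=
  (-1:ℝ)^n * (Nat.factorial (n+1) : ℝ)^2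
    / (((n:ℝ)+1)^3 * (Nat.factorial (2*(n+1)) : ℝ))

lemma keyA (j m : ℕ) :
    aa (j+m+2) j - aa (j+m+1) j = bb (j+m+1) (j+1) - bb (j+m+1) j := by
  have e1 : j+m+2 - (j+1) = m+1 := by omega
  have e2 : j+m+1 - (j+1) = m := by omega
  have e3 : j+m+1 - j = m+1 := by omega
  have e4 : j+m+2 + (j+1) = (j+m+1+(j+1))+1 := by omega
  have e5 : j+m+1+1 + (j+1) = (j+m+1+(j+1))+1 := by omega
  have e6 : j+m+1+1 + j = j+m+1+(j+1) := by omega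
  simp only [aa, bb, e1, e2, e3, e4, e5, e6, Nat.factorial_succ]
  have hF : ((j+m+1+(j+1)).factorial : ℝ) > 0 := by positivity
  have hM : ((m).factorial : ℝ) > 0 := by positivity
  have hJ : ((j).factorial : ℝ) > 0 := by positivity
  push_cast
  field_simp
  ring

lemma keyB (N : ℕ) : bb N 0 = 1/((N:ℝ)+1)^3 := by
  simp only [bb, Nat.sub_zero, Nat.add_zero, pow_zero, one_mul, Nat.factorial_succ]
  have hN : ((N).factorial : ℝ) > 0 := by positivity
  push_cast
  field_simp
  ring

lemma keyC (N : ℕ) : aa (N+1) N + bb N N = 5/2 * tt N := by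
  have e1 : N+1 - (N+1) = 0 := by omega
  have e2 : N - N = 0 := by omega
  have e3 : N+1 + (N+1) = (N+1+N)+1 := by omega
  have e4 : 2*(N+1) = (N+1+N)+1 := by omega
  simp only [aa, bb, tt, e1, e2, e3, e4, Nat.factorial_succ, Nat.factorial_zero]
  have hF : ((N+1+N).factorial : ℝ) > 0 := by positivity
  have hN : ((N).factorial : ℝ) > 0 := by positivity
  push_cast
  field_simp
  ring

lemma keyMain (N : ℕ) :
    (∑ j ∈ range N, (1:ℝ)/((j:ℝ)+1)^3) + (∑ j ∈ range N, aa N j)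
      = 5/2 * ∑ j ∈ range N, tt j := by
  induction N with
  | zero => simp
  | succ N ih =>
    have hstep : ∀ j ∈ range N, aa (N+1) j = aa N j + (bb N (j+1) - bb N j) := by
      intro j hj
      have hj' : j < N := mem_range.1 hj
      have e : j + (N - j - 1) + 1 = N := by omega
      have := keyA j (N - j - 1)
      rw [e] at this
      have e2 : j + (N - j - 1) + 2 = N + 1 := by omega
      rw [e2] at this
      linarith
    have htel : ∑ j ∈ range N, (bb N (j+1) - bb N j) = bb N N - bb N 0 :=
      Finset.sum_range_sub (fun k => bb N k) N
    rw [Finset.sum_range_succ, Finset.sum_range_succ, Finset.sum_range_succ,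
      Finset.sum_congr rfl hstep, Finset.sum_add_distrib, htel, keyB]
    have := keyC N
    linarith [ih]

lemma fb (N : ℕ) : ∀ k, 1 ≤ k → N * Nat.factorial k * Nat.factorial N ≤ Nat.factorial (N+k) := by
  intro k
  induction k with
  | zero => omega
  | succ k ih =>
    intro _
    rcases Nat.eq_zero_or_pos k with hk | hk
    · subst hk
      simp [Nat.factorial_succ]
      nlinarith [Nat.factorial_pos N]
    · have h1 := ih hk
      have : N + (k+1) = (N+k) + 1 := by omega
      rw [this, Nat.factorial_succ, Nat.factorial_succ]
      calc N * ((k+1) * Nat.factorial k) * Nat.factorial N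
          = (k+1) * (N * Nat.factorial k * Nat.factorial N) := by ring
        _ ≤ (k+1) * Nat.factorial (N+k) := Nat.mul_le_mul_left _ h1
        _ ≤ (N+k+1) * Nat.factorial (N+k) := Nat.mul_le_mul_right _ (by omega)

lemma fbound (N k : ℕ) (h1 : 1 ≤ k) (h2 : k ≤ N) :
    N * (Nat.factorial k * Nat.factorial k * Nat.factorial (N-k)) ≤ Nat.factorial (N+k) := by
  have hA : Nat.factorial k * Nat.factorial (N-k) ≤ Nat.factorial N :=
    Nat.le_of_dvd (Nat.factorial_pos N) (Nat.factorial_mul_factorial_dvd_factorial h2)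
  calc N * (Nat.factorial k * Nat.factorial k * Nat.factorial (N-k))
      = N * Nat.factorial k * (Nat.factorial k * Nat.factorial (N-k)) := by ring
    _ ≤ N * Nat.factorial k * Nat.factorial N := Nat.mul_le_mul_left _ hA
    _ ≤ Nat.factorial (N+k) := fb N k h1

lemma aabound (N j : ℕ) (hj : j < N) :
    |aa N j| ≤ 1/(2 * ((j:ℝ)+1)^3 * N) := by
  have h1 : (1:ℕ) ≤ j+1 := by omega
  have h2 : j+1 ≤ N := by omega
  have hb := fbound N (j+1) h1 h2
  have hFpos : (0:ℝ) < (Nat.factorial (N + (j+1)) : ℝ) := by positivity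
  have hNpos : (0:ℝ) < (N:ℝ) := by exact_mod_cast (by omega : 0 < N)
  have habs : |aa N j| = (Nat.factorial (j+1) : ℝ)^2 * (Nat.factorial (N - (j+1)) : ℝ) /
      (2 * ((j:ℝ)+1)^3 * (Nat.factorial (N + (j+1)) : ℝ)) := by
    rw [aa, abs_div, abs_mul, abs_mul]
    rw [abs_pow, abs_neg, abs_one, one_pow, one_mul]
    rw [abs_of_nonneg (by positivity : (0:ℝ) ≤ (Nat.factorial (j+1) : ℝ)^2),
        abs_of_nonneg (by positivity : (0:ℝ) ≤ (Nat.factorial (N - (j+1)) : ℝ)),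
        abs_of_nonneg (by positivity : (0:ℝ) ≤ 2 * ((j:ℝ)+1)^3 * (Nat.factorial (N + (j+1)) : ℝ))]
  rw [habs, div_le_div_iff₀ (by positivity) (by positivity)]
  have hbR : (N:ℝ) * ((Nat.factorial (j+1):ℝ) * (Nat.factorial (j+1):ℝ) * (Nat.factorial (N-(j+1)):ℝ))
      ≤ (Nat.factorial (N+(j+1)) : ℝ) := by exact_mod_cast hb
  nlinarith [pow_pos (by positivity : (0:ℝ) < (j:ℝ)+1) 3]

lemma hz : Summable (fun n : ℕ => (1:ℝ)/((n:ℝ)+1)^3) := by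
  have h : Summable (fun n : ℕ => (1:ℝ)/(n:ℝ)^3) := Real.summable_one_div_nat_pow.mpr (by norm_num)
  have := (summable_nat_add_iff 1).mpr h
  refine this.congr fun n => ?_
  push_cast
  ring

lemma hzt : Filter.Tendsto (fun N => ∑ j ∈ range N, (1:ℝ)/((j:ℝ)+1)^3)
    Filter.atTop (nhds zeta3) := by
  unfold zeta3
  exact hz.hasSum.tendsto_sum_nat

lemma hRt : Filter.Tendsto (fun N => ∑ j ∈ range N, aa N j) Filter.atTop (nhds 0) := by
  apply squeeze_zero_norm (a := fun N : ℕ => zeta3/2 * (1/(N:ℝ)))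
  · intro N
    rcases Nat.eq_zero_or_pos N with h0 | h0
    · subst h0; simp
    have hNpos : (0:ℝ) < (N:ℝ) := by exact_mod_cast h0
    calc ‖∑ j ∈ range N, aa N j‖ ≤ ∑ j ∈ range N, ‖aa N j‖ := norm_sum_le _ _
      _ ≤ ∑ j ∈ range N, 1/(2 * ((j:ℝ)+1)^3 * N) := by
          apply Finset.sum_le_sum
          intro j hj
          exact aabound N j (mem_range.1 hj)
      _ = 1/(2*N) * ∑ j ∈ range N, (1:ℝ)/((j:ℝ)+1)^3 := by
          rw [Finset.mul_sum]
          apply Finset.sum_congr rfl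
          intro j _
          field_simp
      _ ≤ 1/(2*N) * zeta3 := by
          apply mul_le_mul_of_nonneg_left _ (by positivity)
          exact Summable.sum_le_tsum (range N) (fun j _ => by positivity) hz
      _ = zeta3/2 * (1/(N:ℝ)) := by ring
  · have := tendsto_one_div_atTop_nhds_zero_nat.const_mul (zeta3/2)
    simpa using this

lemma htt_sum : Filter.Tendsto (fun N => ∑ j ∈ range N, tt j) Filter.atTop
    (nhds (2/5 * zeta3)) := by
  have h : ∀ N, ∑ j ∈ range N, tt j
      = 2/5 * ((∑ j ∈ range N, (1:ℝ)/((j:ℝ)+1)^3) + ∑ j ∈ range N, aa N j) := by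
    intro N
    have := keyMain N
    linarith
  have ht := Filter.Tendsto.const_mul (2/5 : ℝ) (hzt.add hRt)
  rw [add_zero] at ht
  exact Filter.Tendsto.congr (fun N => (h N).symm) ht

lemma htt_summable : Summable tt := by
  apply Summable.of_norm_bounded hz
  intro n
  have hfac : (Nat.factorial (n+1))^2 ≤ Nat.factorial (2*(n+1)) := by
    apply Nat.le_of_dvd (Nat.factorial_pos _)
    have := Nat.factorial_mul_factorial_dvd_factorial_add (n+1) (n+1)
    rw [pow_two]
    convert this using 2
    omega
  have hfacR : ((Nat.factorial (n+1):ℝ))^2 ≤ (Nat.factorial (2*(n+1)):ℝ) := by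
    exact_mod_cast hfac
  have h1 : ‖tt n‖ = (Nat.factorial (n+1):ℝ)^2 / (((n:ℝ)+1)^3 * (Nat.factorial (2*(n+1)):ℝ)) := by
    rw [tt, norm_div, norm_mul, norm_pow, norm_neg, norm_one, one_pow, one_mul]
    rw [Real.norm_of_nonneg (by positivity : (0:ℝ) ≤ (Nat.factorial (n+1):ℝ)^2),
        Real.norm_of_nonneg (by positivity : (0:ℝ) ≤ ((n:ℝ)+1)^3 * (Nat.factorial (2*(n+1)):ℝ))]
  rw [h1, div_le_div_iff₀ (by positivity) (by positivity)]
  have : (0:ℝ) < ((n:ℝ)+1)^3 := by positivity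
  nlinarith [(by exact_mod_cast Nat.factorial_pos (2*(n+1)) : (0:ℝ) < (Nat.factorial (2*(n+1)):ℝ))]


theorem stmt10 : ∑' n : ℕ, (-1:ℝ)^n * (Nat.factorial (n+1) : ℝ)^2
    / (((n:ℝ)+1)^3 * (Nat.factorial (2*(n+1)) : ℝ)) = (2/5) * zeta3 := by
  have h1 : Filter.Tendsto (fun N => ∑ j ∈ range N, tt j) Filter.atTop
      (nhds (∑' n : ℕ, tt n)) := htt_summable.hasSum.tendsto_sum_nat
  have h2 := tendsto_nhds_unique h1 htt_sum
  exact h2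
end

section
/- The double series ∑_{n=1}^∞ ∑_{k=1}^∞ 1 / (k (n+k)(n+2k)) equals (3/4)ζ(3). -/
open scoped BigOperators
open Filter Function

namespace Aux12

lemma H_succ (m : ℕ) : H (m+1) = H m + 1/((m:ℝ)+1) := Finset.sum_range_succ _ m

noncomputable def F (p : ℕ × ℕ) : ℝ :=
  1/(((p.1:ℝ)+1)*((p.2:ℝ)+1)*((p.1:ℝ)+(p.2:ℝ)+2))

noncomputable def G (p : ℕ × ℕ) : ℝ :=
  1/(((p.1:ℝ)+1)*(((p.1:ℝ)+(p.2:ℝ)+2))^2)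

lemma F_pos (p : ℕ × ℕ) : 0 < F p := by
  unfold F; positivity

lemma G_nonneg (p : ℕ × ℕ) : 0 ≤ G p := by unfold G; positivity

lemma G_le_F (p : ℕ × ℕ) : G p ≤ F p := by
  unfold F G
  have h1 : (0:ℝ) ≤ (p.1:ℝ) := Nat.cast_nonneg _
  have h2 : (0:ℝ) ≤ (p.2:ℝ) := Nat.cast_nonneg _
  rw [div_le_div_iff₀ (by positivity) (by positivity)]
  nlinarith [mul_nonneg (mul_nonneg (by linarith : (0:ℝ) ≤ (p.1:ℝ)+1)
    (by linarith : (0:ℝ) ≤ (p.1:ℝ)+1)) (by linarith : (0:ℝ) ≤ (p.1:ℝ)+(p.2:ℝ)+2)]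

lemma summable_cube : Summable (fun n : ℕ => (1:ℝ)/((n:ℝ)+1)^3) := by
  have h := (summable_nat_add_iff 1).2 (Real.summable_one_div_nat_pow.2 (by norm_num : 1 < 3))
  refine h.congr fun n => ?_
  push_cast
  ring

lemma summable_32 : Summable (fun n : ℕ => 1/(((n:ℝ)+1) * Real.sqrt ((n:ℝ)+1))) := by
  have h := (summable_nat_add_iff 1).2
    (Real.summable_one_div_nat_rpow.2 (by norm_num : (1:ℝ) < 3/2))
  refine h.congr fun n => ?_
  have hx : (0:ℝ) < (n:ℝ)+1 := by positivity
  have : ((n+1 : ℕ):ℝ) ^ ((3:ℝ)/2) = ((n:ℝ)+1) * Real.sqrt ((n:ℝ)+1) := by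
    push_cast
    rw [show (3:ℝ)/2 = 1 + 1/2 by norm_num, Real.rpow_add hx, Real.rpow_one,
      ← Real.sqrt_eq_rpow]
  rw [this]

lemma summable_F : Summable F := by
  have hs := summable_32
  have hprod := hs.mul_of_nonneg hs (fun x => by positivity) (fun x => by positivity)
  refine Summable.of_nonneg_of_le (fun p => (F_pos p).le) (fun p => ?_) (hprod.mul_left (1/2))
  set a : ℝ := (p.1:ℝ) + 1 with ha
  set b : ℝ := (p.2:ℝ) + 1 with hb
  have ha0 : (0:ℝ) < a := by positivity
  have hb0 : (0:ℝ) < b := by positivity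
  set sa : ℝ := Real.sqrt a with hsa
  set sb : ℝ := Real.sqrt b with hsb
  have sa0 : 0 < sa := Real.sqrt_pos.2 ha0
  have sb0 : 0 < sb := Real.sqrt_pos.2 hb0
  have sa2 : sa ^ 2 = a := Real.sq_sqrt ha0.le
  have sb2 : sb ^ 2 = b := Real.sq_sqrt hb0.le
  have key : 2 * (a * sa) * (b * sb) ≤ a * b * (a + b) := by
    rw [← sa2, ← sb2]
    nlinarith [mul_nonneg (mul_nonneg (sq_nonneg sa) (sq_nonneg sb))
      (sq_nonneg (sa - sb)), sq_nonneg (sa - sb), mul_pos sa0 sb0]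
  have hFp : F p = 1/(a*b*(a+b)) := by
    unfold F; rw [ha, hb]; ring_nf
  rw [hFp]
  rw [show (1:ℝ)/2 * (1/(a*sa) * (1/(b*sb)))
      = 1/(2*(a*sa)*(b*sb)) by field_simp]
  exact one_div_le_one_div_of_le (by positivity) key

lemma summable_G : Summable G :=
  Summable.of_nonneg_of_le G_nonneg G_le_F summable_F

lemma sum_shift (c N : ℕ) :
    ∑ k ∈ Finset.range N, (1:ℝ)/((k:ℝ)+(c:ℝ)+1) = H (N+c) - H c := by
  induction N with
  | zero => simp
  | succ n ih =>
      rw [Finset.sum_range_succ, ih, show n+1+c = (n+c)+1 from by omega, H_succ]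
      push_cast
      ring

lemma tail_tendsto (c : ℕ) :
    Tendsto (fun N : ℕ => H (N+c) - H N) atTop (nhds 0) := by
  have key : ∀ N : ℕ, H (N+c) - H N = ∑ k ∈ Finset.range c, (1:ℝ)/((k:ℝ)+(N:ℝ)+1) := by
    intro N
    rw [sum_shift N c, Nat.add_comm N c]
  have h0 : Tendsto (fun N : ℕ => (c:ℝ) * (1/((N:ℝ)+1))) atTop (nhds 0) := by
    simpa using (tendsto_one_div_add_atTop_nhds_zero_nat).const_mul (c:ℝ)
  refine squeeze_zero (fun N => ?_) (fun N => ?_) h0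
  · rw [key N]
    apply Finset.sum_nonneg
    intro k _
    positivity
  · rw [key N]
    calc ∑ k ∈ Finset.range c, (1:ℝ)/((k:ℝ)+(N:ℝ)+1)
        ≤ ∑ _k ∈ Finset.range c, (1:ℝ)/((N:ℝ)+1) := by
          apply Finset.sum_le_sum
          intro k _
          apply one_div_le_one_div_of_le
          · positivity
          · have : (0:ℝ) ≤ (k:ℝ) := Nat.cast_nonneg k
            linarith
      _ = (c:ℝ) * (1/((N:ℝ)+1)) := by
          rw [Finset.sum_const, Finset.card_range, nsmul_eq_mul]

lemma telescope (c : ℕ) :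
    HasSum (fun k : ℕ => (1:ℝ)/((k:ℝ)+1) - 1/((k:ℝ)+(c:ℝ)+2)) (H (c+1)) := by
  have hnn : ∀ k : ℕ, 0 ≤ (1:ℝ)/((k:ℝ)+1) - 1/((k:ℝ)+(c:ℝ)+2) := by
    intro k
    have h1 : (0:ℝ) < (k:ℝ)+1 := by positivity
    have h2 : (k:ℝ)+1 ≤ (k:ℝ)+(c:ℝ)+2 := by
      have : (0:ℝ) ≤ (c:ℝ) := Nat.cast_nonneg c
      linarith
    have := one_div_le_one_div_of_le h1 h2
    linarith
  rw [hasSum_iff_tendsto_nat_of_nonneg hnn]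
  have hps : ∀ N : ℕ, ∑ k ∈ Finset.range N, ((1:ℝ)/((k:ℝ)+1) - 1/((k:ℝ)+(c:ℝ)+2))
      = H (c+1) - (H (N+(c+1)) - H N) := by
    intro N
    rw [Finset.sum_sub_distrib]
    have h1 : ∑ k ∈ Finset.range N, (1:ℝ)/((k:ℝ)+1) = H N := rfl
    have h2 : ∑ k ∈ Finset.range N, (1:ℝ)/((k:ℝ)+(c:ℝ)+2)
        = H (N+(c+1)) - H (c+1) := by
      rw [← sum_shift (c+1) N]
      apply Finset.sum_congr rfl
      intro k _
      push_cast
      ring_nf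
    rw [h1, h2]
    ring
  simp only [hps]
  have := (tail_tendsto (c+1)).const_sub (H (c+1))
  simpa using this

lemma inner_hasSum (j : ℕ) :
    HasSum (fun k : ℕ => F (j, k)) ((1/((j:ℝ)+1)^2) * H (j+1)) := by
  have h := (telescope j).mul_left (1/((j:ℝ)+1)^2)
  have hfun : (fun k : ℕ => F (j, k))
      = fun k : ℕ => (1/((j:ℝ)+1)^2) * ((1:ℝ)/((k:ℝ)+1) - 1/((k:ℝ)+(j:ℝ)+2)) := by
    funext k
    unfold F
    have h1 : ((j:ℝ)+1) ≠ 0 := by positivity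
    have h2 : ((k:ℝ)+1) ≠ 0 := by positivity
    have h3 : ((k:ℝ)+(j:ℝ)+2) ≠ 0 := by positivity
    field_simp
    ring
  rw [hfun]
  exact h

/-- the summand of the statement, as a function on pairs -/
noncomputable def P (p : ℕ × ℕ) : ℝ :=
  1 / (((p.2:ℝ)+1) * ((p.1:ℝ)+(p.2:ℝ)+2) * ((p.1:ℝ)+2*(p.2:ℝ)+3))

noncomputable def Ftri (p : ℕ × ℕ) : ℝ := if p.1 < p.2 then F p else 0
noncomputable def Fdiag (p : ℕ × ℕ) : ℝ := if p.1 = p.2 then F p else 0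
noncomputable def Ftri' (p : ℕ × ℕ) : ℝ := if p.2 < p.1 then F p else 0
noncomputable def W (p : ℕ × ℕ) : ℝ :=
  if p.2 ≤ p.1 then 1/(((p.2:ℝ)+1)*(((p.1:ℝ)+2))^2) else 0

lemma summable_Ftri : Summable Ftri :=
  Summable.of_nonneg_of_le (fun p => by unfold Ftri; split; exacts [(F_pos _).le, le_rfl])
    (fun p => by unfold Ftri; split; exacts [le_rfl, (F_pos _).le]) summable_F

lemma summable_Fdiag : Summable Fdiag :=
  Summable.of_nonneg_of_le (fun p => by unfold Fdiag; split; exacts [(F_pos _).le, le_rfl])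
    (fun p => by unfold Fdiag; split; exacts [le_rfl, (F_pos _).le]) summable_F

lemma summable_Ftri' : Summable Ftri' :=
  Summable.of_nonneg_of_le (fun p => by unfold Ftri'; split; exacts [(F_pos _).le, le_rfl])
    (fun p => by unfold Ftri'; split; exacts [le_rfl, (F_pos _).le]) summable_F

lemma split_sum :
    ∑' p, F p = ∑' p, Ftri p + ∑' p, Fdiag p + ∑' p, Ftri' p := by
  have h1 : ∀ p : ℕ × ℕ, F p = Ftri p + Fdiag p + Ftri' p := by
    intro p
    unfold Ftri Fdiag Ftri'
    rcases lt_trichotomy p.1 p.2 with h | h | h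
    · rw [if_pos h, if_neg h.ne, if_neg (by omega), add_zero, add_zero]
    · rw [if_neg (by omega), if_pos h, if_neg (by omega), zero_add, add_zero]
    · rw [if_neg (by omega), if_neg (by omega), if_pos h, zero_add, zero_add]
  calc ∑' p, F p = ∑' p, (Ftri p + Fdiag p + Ftri' p) := tsum_congr h1
    _ = ∑' p, (Ftri p + Fdiag p) + ∑' p, Ftri' p :=
        Summable.tsum_add (summable_Ftri.add summable_Fdiag) summable_Ftri'
    _ = ∑' p, Ftri p + ∑' p, Fdiag p + ∑' p, Ftri' p := by
        rw [Summable.tsum_add summable_Ftri summable_Fdiag]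

lemma F_swap (p : ℕ × ℕ) : F p.swap = F p := by
  unfold F
  simp only [Prod.fst_swap, Prod.snd_swap]
  ring_nf

lemma tri'_eq : ∑' p, Ftri' p = ∑' p, Ftri p := by
  have h := (Equiv.prodComm ℕ ℕ).tsum_eq Ftri
  rw [← h]
  apply tsum_congr
  intro p
  unfold Ftri Ftri'
  simp only [Equiv.prodComm_apply, Prod.fst_swap, Prod.snd_swap]
  by_cases hp : p.2 < p.1
  · rw [if_pos hp]; simp [hp, F_swap]
  · rw [if_neg hp]; simp [hp]

lemma diag_eq : ∑' p, Fdiag p = zeta3 / 2 := by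
  have hi : Injective (fun n : ℕ => (n, n)) := fun a b h => by simpa using congrArg Prod.fst h
  have hsupp : support Fdiag ⊆ Set.range (fun n : ℕ => (n, n)) := by
    intro p hp
    rcases eq_or_ne p.1 p.2 with h | h
    · exact ⟨p.1, by rw [Prod.ext_iff]; exact ⟨rfl, h⟩⟩
    · exfalso; apply hp; unfold Fdiag; rw [if_neg h]
  rw [← hi.tsum_eq hsupp]
  have : ∀ n : ℕ, Fdiag (n, n) = (1/2) * ((1:ℝ)/((n:ℝ)+1)^3) := by
    intro n
    unfold Fdiag F
    rw [if_pos rfl]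
    have h1 : ((n:ℝ)+1) ≠ 0 := by positivity
    field_simp
    ring
  rw [tsum_congr this, tsum_mul_left]
  rw [zeta3]
  ring

noncomputable def etri (q : ℕ × ℕ) : ℕ × ℕ := (q.2, q.1+q.2+1)

lemma etri_inj : Injective etri := by
  intro a b h
  unfold etri at h
  rw [Prod.ext_iff] at h ⊢
  simp only at h
  omega

lemma Ftri_etri (q : ℕ × ℕ) : Ftri (etri q) = P q := by
  unfold Ftri etri P
  rw [if_pos (by omega)]
  unfold F
  simp only
  push_cast
  ring_nf

lemma tri_supp : support Ftri ⊆ Set.range etri := by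
  intro p hp
  have h : p.1 < p.2 := by
    by_contra h
    apply hp
    unfold Ftri
    rw [if_neg h]
  exact ⟨(p.2 - p.1 - 1, p.1), by unfold etri; rw [Prod.ext_iff]; simp; omega⟩

lemma tri_eq : ∑' q, P q = ∑' p, Ftri p := by
  rw [← etri_inj.tsum_eq tri_supp]
  exact (tsum_congr Ftri_etri).symm

lemma summable_P : Summable P := by
  have := summable_Ftri.comp_injective etri_inj
  exact this.congr Ftri_etri

noncomputable def e2 (q : ℕ × ℕ) : ℕ × ℕ := (q.1+q.2, q.1)

lemma e2_inj : Injective e2 := by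
  intro a b h
  unfold e2 at h
  rw [Prod.ext_iff] at h ⊢
  simp only at h
  omega

lemma W_e2 (q : ℕ × ℕ) : W (e2 q) = G q := by
  unfold W e2 G
  rw [if_pos (by simp)]
  simp only
  push_cast
  ring_nf

lemma W_supp : support W ⊆ Set.range e2 := by
  intro p hp
  have h : p.2 ≤ p.1 := by
    by_contra h
    apply hp
    unfold W
    rw [if_neg h]
  exact ⟨(p.2, p.1 - p.2), by unfold e2; rw [Prod.ext_iff]; simp; omega⟩

lemma G_eq_W : ∑' p, G p = ∑' p, W p := by
  rw [← e2_inj.tsum_eq W_supp]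
  exact (tsum_congr W_e2).symm

lemma summable_W : Summable W := by
  rw [← e2_inj.summable_iff (fun x hx => ?_)]
  · exact (summable_G.congr (fun q => (W_e2 q).symm))
  · by_contra h
    exact hx (W_supp h)

lemma W_fiber (m : ℕ) :
    HasSum (fun a : ℕ => W (m, a)) ((1/((m:ℝ)+2)^2) * H (m+1)) := by
  have hvanish : ∀ a ∉ Finset.range (m+1), W (m, a) = 0 := by
    intro a ha
    unfold W
    rw [if_neg]
    simp only [Finset.mem_range] at ha
    omega
  have h : HasSum (fun a : ℕ => W (m, a)) (∑ a ∈ Finset.range (m+1), W (m, a)) :=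
    hasSum_sum_of_ne_finset_zero hvanish
  have hval : ∑ a ∈ Finset.range (m+1), W (m, a) = (1/((m:ℝ)+2)^2) * H (m+1) := by
    rw [H, Finset.mul_sum]
    apply Finset.sum_congr rfl
    intro a ha
    simp only [Finset.mem_range] at ha
    unfold W
    rw [if_pos (by simpa using Nat.lt_succ_iff.1 ha)]
    simp only
    rw [one_div_mul_one_div, mul_comm]
  rwa [hval] at h

lemma hU : HasSum (fun m : ℕ => (1/((m:ℝ)+2)^2) * H (m+1)) (∑' p, W p) :=
  summable_W.hasSum.prod_fiberwise W_fiber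

lemma hT : HasSum (fun j : ℕ => (1/((j:ℝ)+1)^2) * H (j+1)) (∑' p, F p) :=
  summable_F.hasSum.prod_fiberwise inner_hasSum

noncomputable def phi (j : ℕ) : ℝ := (1/((j:ℝ)+1)^2) * H j

lemma phi_eq (j : ℕ) :
    phi j = (1/((j:ℝ)+1)^2) * H (j+1) - (1:ℝ)/((j:ℝ)+1)^3 := by
  unfold phi
  rw [H_succ]
  have h1 : ((j:ℝ)+1) ≠ 0 := by positivity
  field_simp
  ring

lemma summable_phi : Summable phi :=
  (hT.summable.sub summable_cube).congr (fun j => (phi_eq j).symm)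

lemma phi_tsum : ∑' j, phi j = ∑' p, W p := by
  rw [Summable.tsum_eq_zero_add summable_phi]
  have h0 : phi 0 = 0 := by
    unfold phi H
    simp
  rw [h0, zero_add, ← hU.tsum_eq]
  apply tsum_congr
  intro m
  unfold phi
  push_cast
  ring_nf

lemma T_sub_U : ∑' p, F p - ∑' p, G p = zeta3 := by
  rw [G_eq_W, ← phi_tsum, ← hT.tsum_eq, ← Summable.tsum_sub hT.summable summable_phi]
  rw [zeta3]
  apply tsum_congr
  intro j
  rw [phi_eq]
  ring

lemma summable_Gswap : Summable (fun p : ℕ × ℕ => G p.swap) :=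
  summable_G.comp_injective Prod.swap_injective

lemma T_eq_2U : ∑' p, F p = 2 * ∑' p, G p := by
  have hpt : ∀ p : ℕ × ℕ, F p = G p + G p.swap := by
    intro p
    unfold F G
    simp only [Prod.fst_swap, Prod.snd_swap]
    have h1 : ((p.1:ℝ)+1) ≠ 0 := by positivity
    have h2 : ((p.2:ℝ)+1) ≠ 0 := by positivity
    have h3 : ((p.1:ℝ)+(p.2:ℝ)+2) ≠ 0 := by positivity
    have h4 : ((p.2:ℝ)+(p.1:ℝ)+2) ≠ 0 := by positivity
    field_simp
    ring
  rw [tsum_congr hpt, Summable.tsum_add summable_G summable_Gswap]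
  have : ∑' p : ℕ × ℕ, G p.swap = ∑' p, G p := (Equiv.prodComm ℕ ℕ).tsum_eq G
  rw [this]
  ring

lemma T_val : ∑' p, F p = 2 * zeta3 := by
  have h1 := T_sub_U
  have h2 := T_eq_2U
  linarith

lemma U_val : ∑' p, G p = zeta3 := by
  have h1 := T_sub_U
  have h2 := T_eq_2U
  linarith

lemma tri_val : ∑' p, Ftri p = (3/4) * zeta3 := by
  have h := split_sum
  rw [tri'_eq, diag_eq, T_val] at h
  linarith

end Aux12

theorem stmt12 : ∑' n : ℕ, ∑' k : ℕ,
    (1:ℝ) / (((k:ℝ)+1) * ((n:ℝ)+(k:ℝ)+2) * ((n:ℝ)+2*(k:ℝ)+3)) = (3/4) * zeta3 := by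
  have h1 : ∑' n : ℕ, ∑' k : ℕ,
      (1:ℝ) / (((k:ℝ)+1) * ((n:ℝ)+(k:ℝ)+2) * ((n:ℝ)+2*(k:ℝ)+3))
      = ∑' p : ℕ × ℕ, Aux12.P p := by
    rw [Summable.tsum_prod' Aux12.summable_P (fun n => Aux12.summable_P.prod_factor n)]
    rfl
  rw [h1, Aux12.tri_eq, Aux12.tri_val]
end

section
/- The double series ∑_{n=1}^∞ ∑_{k=1}^∞ (1/(k!·k)) · Γ(2k)Γ(n+k)/Γ(1+n+2k) equals (1/2)ζ(3). -/
open scoped BigOperators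

/-- the term of the double series, with `k` first -/
noncomputable def F (k n : ℕ) : ℝ :=
    (1 / ((Nat.factorial (k+1) : ℝ) * ((k:ℝ)+1))) *
    ((Nat.factorial (2*k+1) : ℝ) * (Nat.factorial (n+k+1) : ℝ) / (Nat.factorial (n+2*k+3) : ℝ))

/-- the telescoping auxiliary function -/
noncomputable def G (k n : ℕ) : ℝ :=
    (Nat.factorial (n+k+1) : ℝ) / (((k:ℝ)+1) * (Nat.factorial (n+2*k+2) : ℝ))

lemma fact_cast_pos (m : ℕ) : (0:ℝ) < (Nat.factorial m : ℝ) := by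
  exact_mod_cast Nat.factorial_pos m

lemma tele (k n : ℕ) :
    G k n - G k (n+1) =
      (Nat.factorial (n+k+1) : ℝ) / (Nat.factorial (n+2*k+3) : ℝ) := by
  have h1 : n+1+k+1 = (n+k+1)+1 := by ring
  have h2 : n+1+2*k+2 = (n+2*k+2)+1 := by ring
  have h3 : n+2*k+3 = (n+2*k+2)+1 := by ring
  simp only [G, h1, h2, h3, Nat.factorial_succ]
  have p1 := fact_cast_pos (n+k+1)
  have p2 := fact_cast_pos (n+2*k+2)
  have pk : ((k:ℝ)+1) ≠ 0 := by positivity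
  push_cast
  field_simp
  ring

lemma G_nonneg (k n : ℕ) : 0 ≤ G k n := by
  unfold G; positivity

lemma G_le (k n : ℕ) : G k n ≤ 1/((n:ℝ)+1) := by
  unfold G
  rw [div_le_div_iff₀ (by positivity) (by positivity)]
  have h1 : (n+1) * Nat.factorial (n+k+1) ≤ Nat.factorial (n+2*k+2) := by
    calc (n+1) * Nat.factorial (n+k+1) ≤ (n+k+2) * Nat.factorial (n+k+1) := by
          exact Nat.mul_le_mul_right _ (by omega)
      _ = Nat.factorial (n+k+2) := (Nat.factorial_succ _).symm
      _ ≤ Nat.factorial (n+2*k+2) := Nat.factorial_le (by omega)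
  have h1' : ((n:ℝ)+1) * (Nat.factorial (n+k+1) : ℝ) ≤ (Nat.factorial (n+2*k+2) : ℝ) := by
    exact_mod_cast h1
  have hk : (1:ℝ) ≤ (k:ℝ)+1 := by have := Nat.cast_nonneg (α := ℝ) k; linarith
  nlinarith [fact_cast_pos (n+2*k+2), fact_cast_pos (n+k+1)]

lemma G_tendsto (k : ℕ) :
    Filter.Tendsto (fun n => G k n) Filter.atTop (nhds 0) := by
  apply squeeze_zero (fun n => G_nonneg k n) (fun n => G_le k n)
  exact tendsto_one_div_add_atTop_nhds_zero_nat

lemma hasSum_t (k : ℕ) :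
    HasSum (fun n => (Nat.factorial (n+k+1) : ℝ) / (Nat.factorial (n+2*k+3) : ℝ)) (G k 0) := by
  rw [hasSum_iff_tendsto_nat_of_nonneg (fun n => by positivity)]
  have : ∀ N : ℕ, ∑ i ∈ Finset.range N,
      (Nat.factorial (i+k+1) : ℝ) / (Nat.factorial (i+2*k+3) : ℝ) = G k 0 - G k N := by
    intro N
    rw [← Finset.sum_range_sub' (fun n => G k n) N]
    exact Finset.sum_congr rfl (fun i _ => (tele k i).symm)
  simp only [this]
  have := (G_tendsto k).const_sub (G k 0)
  simpa using this

lemma hasSum_F (k : ℕ) : HasSum (fun n => F k n) (1 / (2 * ((k:ℝ)+1)^3)) := by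
  have h := (hasSum_t k).mul_left
    ((1 / ((Nat.factorial (k+1) : ℝ) * ((k:ℝ)+1))) * (Nat.factorial (2*k+1) : ℝ))
  have e : ((1 / ((Nat.factorial (k+1) : ℝ) * ((k:ℝ)+1))) * (Nat.factorial (2*k+1) : ℝ)) * G k 0
      = 1 / (2 * ((k:ℝ)+1)^3) := by
    have h1 : 0+2*k+2 = (2*k+1)+1 := by ring
    have h2 : 0+k+1 = k+1 := by ring
    simp only [G, h1, h2, Nat.factorial_succ]
    have p1 := fact_cast_pos (k+1)
    have p2 := fact_cast_pos (2*k+1)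
    have pk : ((k:ℝ)+1) ≠ 0 := by positivity
    push_cast
    field_simp
    ring
  rw [← e]
  convert h using 2 with n
  · rfl
  simp only [F]
  ring

lemma summable_zeta : Summable (fun k : ℕ => 1 / (2 * ((k:ℝ)+1)^3)) := by
  have h : Summable (fun n : ℕ => 1/((n:ℝ)^3)) :=
    Real.summable_one_div_nat_pow.mpr (by norm_num)
  have h2 : Summable (fun n : ℕ => 1/(((n:ℝ)+1)^3)) := by
    have := (summable_nat_add_iff 1).mpr h
    refine this.congr (fun n => ?_)
    push_cast
    ring
  have := h2.mul_left (1/2)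
  refine this.congr (fun n => ?_)
  field_simp

lemma summable_uncurry : Summable (Function.uncurry F) := by
  apply (summable_prod_of_nonneg ?_).mpr
  · constructor
    · intro k
      exact (hasSum_F k).summable
    · apply summable_zeta.congr
      intro k
      exact ((hasSum_F k).tsum_eq).symm
  · intro p
    simp only [Function.uncurry, F]
    positivity

theorem stmt15 : ∑' n : ℕ, ∑' k : ℕ,
    (1 / ((Nat.factorial (k+1) : ℝ) * ((k:ℝ)+1))) *
    ((Nat.factorial (2*k+1) : ℝ) * (Nat.factorial (n+k+1) : ℝ) / (Nat.factorial (n+2*k+3) : ℝ))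
    = (1/2) * zeta3 := by
  have swap : ∑' n : ℕ, ∑' k : ℕ, F k n = ∑' k : ℕ, ∑' n : ℕ, F k n :=
    Summable.tsum_comm summable_uncurry
  have : ∑' n : ℕ, ∑' k : ℕ,
      (1 / ((Nat.factorial (k+1) : ℝ) * ((k:ℝ)+1))) *
      ((Nat.factorial (2*k+1) : ℝ) * (Nat.factorial (n+k+1) : ℝ) / (Nat.factorial (n+2*k+3) : ℝ))
      = ∑' n : ℕ, ∑' k : ℕ, F k n := rfl
  rw [this, swap]
  have e1 : ∑' k : ℕ, ∑' n : ℕ, F k n = ∑' k : ℕ, 1 / (2 * ((k:ℝ)+1)^3) :=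
    tsum_congr (fun k => (hasSum_F k).tsum_eq)
  rw [e1]
  unfold zeta3
  rw [← tsum_mul_left]
  apply tsum_congr
  intro k
  field_simp
end

section
/- For every positive integer k, the finite combinatorial identity ∑_{n=1}^k (1/n) · Γ(2k-n)/Γ(1+k-n) = (Γ(2k)/Γ(1+k)) · (H_{2k-1} - H_{k-1}) holds, where H_m = ∑_{j=1}^m 1/j. -/
open scoped BigOperators

lemma alg (a b c x y u v : ℝ) (hu : u ≠ 0) (hv : v ≠ 0) (hpas : c = a + b)
    (hrel : v * a = c * u) :
    a*(x - y) + b*(x - (y + 1/u)) = c*((x + 1/v) - (y + 1/u)) := by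
  subst hpas
  have e1 : (a + b)/v = a/u := by
    rw [div_eq_div_iff hv hu]; linear_combination -hrel
  linear_combination -e1

lemma sum_inv_Icc (m : ℕ) : ∑ n ∈ Finset.Icc 1 m, (1:ℝ)/(n:ℝ) = H m := by
  induction m with
  | zero => simp [H]
  | succ m ih => rw [Finset.sum_Icc_succ_top (by omega), ih, H_succ]; push_cast; ring

lemma key : ∀ N K : ℕ, K ≤ N →
    ∑ n ∈ Finset.Icc 1 (N-K), (1/(n:ℝ)) * ((N-n).choose K : ℝ)
      = (N.choose K : ℝ) * (H N - H K) := by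
  intro N
  induction N with
  | zero => intro K hK; interval_cases K; simp
  | succ N ih =>
    intro K hK
    rcases Nat.eq_or_lt_of_le hK with rfl | hKN
    · simp
    have hK' : K ≤ N := Nat.lt_succ_iff.mp hKN
    rcases Nat.eq_zero_or_pos K with rfl | hKpos
    · simp only [Nat.choose_zero_right, Nat.cast_one, mul_one, Nat.sub_zero]
      rw [show H 0 = 0 from rfl, sub_zero, one_mul, sum_inv_Icc]
    obtain ⟨K', rfl⟩ : ∃ K', K = K' + 1 := ⟨K - 1, (Nat.succ_pred_eq_of_pos hKpos).symm⟩
    have h1 : N + 1 - (K' + 1) = N - K' := by omega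
    have h2 : ∀ n ∈ Finset.Icc 1 (N - K'),
        ((N + 1 - n).choose (K' + 1) : ℝ)
          = ((N - n).choose K' : ℝ) + ((N - n).choose (K' + 1) : ℝ) := by
      intro n hn
      simp only [Finset.mem_Icc] at hn
      have : N + 1 - n = (N - n) + 1 := by omega
      rw [this, Nat.choose_succ_succ]
      push_cast; ring
    rw [h1, Finset.sum_congr rfl (fun n hn => by rw [h2 n hn])]
    simp only [mul_add]
    rw [Finset.sum_add_distrib, ih K' (by omega)]
    have hNK : 1 ≤ N - K' := by omega
    have h3 : N - K' = (N - (K' + 1)) + 1 := by omega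
    have h4 : ∑ n ∈ Finset.Icc 1 (N - K'), (1/(n:ℝ)) * ((N - n).choose (K' + 1) : ℝ)
        = ∑ n ∈ Finset.Icc 1 (N - (K' + 1)), (1/(n:ℝ)) * ((N - n).choose (K' + 1) : ℝ) := by
      rw [h3, Finset.sum_Icc_succ_top (by omega)]
      have : N - ((N - (K' + 1)) + 1) = K' := by omega
      rw [this, Nat.choose_succ_self]
      simp
    rw [h4, ih (K' + 1) hK']
    -- algebra
    have hrel : ((N + 1) : ℝ) * (N.choose K' : ℝ)
        = ((N + 1).choose (K' + 1) : ℝ) * ((K' : ℝ) + 1) := by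
      exact_mod_cast congrArg (Nat.cast : ℕ → ℝ) (Nat.add_one_mul_choose_eq N K')
    have hpascal : ((N + 1).choose (K' + 1) : ℝ)
        = (N.choose K' : ℝ) + (N.choose (K' + 1) : ℝ) := by
      rw [Nat.choose_succ_succ]; push_cast; ring
    rw [H_succ N, H_succ K']
    have hN1 : ((N : ℝ) + 1) ≠ 0 := by positivity
    have hK1 : ((K' : ℝ) + 1) ≠ 0 := by positivity
    exact alg _ _ _ _ _ _ _ hK1 hN1 hpascal hrel

theorem stmt19 (k : ℕ) (hk : 0 < k) :
    ∑ n ∈ Finset.Icc 1 k, (1 / (n:ℝ)) *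
      ((Nat.factorial (2*k - n - 1) : ℝ) / (Nat.factorial (k - n) : ℝ))
    = ((Nat.factorial (2*k - 1) : ℝ) / (Nat.factorial k : ℝ)) * (H (2*k - 1) - H (k - 1)) := by
  have hKN : k - 1 ≤ 2*k - 1 := by omega
  have hk2 : (2*k - 1) - (k - 1) = k := by omega
  have h := key (2*k - 1) (k - 1) hKN
  rw [hk2] at h
  have hfac : ∀ n ∈ Finset.Icc 1 k,
      ((2*k - n - 1).factorial : ℝ) / ((k - n).factorial : ℝ)
        = ((k-1).factorial : ℝ) * ((2*k - 1 - n).choose (k - 1) : ℝ) := by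
    intro n hn
    simp only [Finset.mem_Icc] at hn
    have e1 : 2*k - n - 1 = 2*k - 1 - n := by omega
    have e2 : (2*k - 1 - n) - (k - 1) = k - n := by omega
    have hle : k - 1 ≤ 2*k - 1 - n := by omega
    have := Nat.choose_mul_factorial_mul_factorial hle
    rw [e2] at this
    rw [e1, ← this]
    have hkn : ((k - n).factorial : ℝ) ≠ 0 := by positivity
    push_cast
    field_simp
  have hfac2 : ((2*k - 1).factorial : ℝ) / (k.factorial : ℝ)
      = ((k-1).factorial : ℝ) * ((2*k - 1).choose (k - 1) : ℝ) := by
    have e2 : (2*k - 1) - (k - 1) = k := by omega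
    have := Nat.choose_mul_factorial_mul_factorial hKN
    rw [e2] at this
    rw [← this]
    have hkn : (k.factorial : ℝ) ≠ 0 := by positivity
    push_cast
    field_simp
  rw [Finset.sum_congr rfl (fun n hn => by rw [hfac n hn]), hfac2]
  calc ∑ n ∈ Finset.Icc 1 k, (1/(n:ℝ)) * (((k-1).factorial : ℝ) * ((2*k-1-n).choose (k-1) : ℝ))
      = ((k-1).factorial : ℝ) * ∑ n ∈ Finset.Icc 1 k, (1/(n:ℝ)) * ((2*k-1-n).choose (k-1) : ℝ) := by
        rw [Finset.mul_sum]; apply Finset.sum_congr rfl; intro n _; ring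
    _ = ((k-1).factorial : ℝ) * (((2*k-1).choose (k-1) : ℝ) * (H (2*k-1) - H (k-1))) := by rw [h]
    _ = ((k-1).factorial : ℝ) * ((2*k-1).choose (k-1) : ℝ) * (H (2*k-1) - H (k-1)) := by ring
end
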